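/- If every set X ⊆ ℝ satisfying S1(O,O) is countable, then every strongly null set X ⊆ ℝ is countable. (Borel's Conjecture for the Rothberger property S1(O,O) implies Borel's Conjecture.) -/

import Mathlib

open Filter Set

/-- `f ≤* g`: `f n ≤ g n` for all but finitely many `n`. -/
def LeStar (f g : ℕ → ℕ) : Prop := ∀ᶠ n in Filter.atTop, f n ≤ g n

/-- A subset of Baire space is bounded if it has a `≤*`-upper bound. -/
def BddFam (B : Set (ℕ → ℕ)) : Prop := ∃ g : ℕ → ℕ, ∀ f ∈ B, LeStar f g

/-- A subset of Baire space is dominating if every function is `≤*` below some member. -/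
def DominatingFam (D : Set (ℕ → ℕ)) : Prop := ∀ g : ℕ → ℕ, ∃ f ∈ D, LeStar g f

/-- An open cover of a topological space. -/
def IsOpenCover {X : Type*} [TopologicalSpace X] (𝒰 : Set (Set X)) : Prop :=
  (∀ U ∈ 𝒰, IsOpen U) ∧ ⋃₀ 𝒰 = Set.univ

/-- The cover `𝒰` contains a finite subcover. -/
def HasFinSubcover {X : Type*} (𝒰 : Set (Set X)) : Prop :=
  ∃ ℱ ⊆ 𝒰, ℱ.Finite ∧ ⋃₀ ℱ = Set.univ

/-- The Hurewicz property `Ufin(O,Γ)`. -/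
def UfinOGamma (X : Type*) [TopologicalSpace X] : Prop :=
  ∀ 𝒰 : ℕ → Set (Set X),
    (∀ n, IsOpenCover (𝒰 n)) → (∀ n, ¬ HasFinSubcover (𝒰 n)) →
    ∃ ℱ : ℕ → Set (Set X),
      (∀ n, ℱ n ⊆ 𝒰 n ∧ (ℱ n).Finite) ∧
      ∀ x : X, ∀ᶠ n in Filter.atTop, x ∈ ⋃₀ ℱ n

/-- A set of reals is strongly null (has strong measure zero). -/
def StronglyNull (X : Set ℝ) : Prop :=
  ∀ ε : ℕ → ℝ, (∀ n, 0 < ε n) →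
    ∃ I : ℕ → Set ℝ, (∀ n, EMetric.diam (I n) < ENNReal.ofReal (ε n)) ∧ X ⊆ ⋃ n, I n

/-- The Rothberger property `S1(O,O)`. -/
def S1OO (X : Type*) [TopologicalSpace X] : Prop :=
  ∀ 𝒰 : ℕ → Set (Set X), (∀ n, IsOpenCover (𝒰 n)) →
    ∃ U : ℕ → Set X, (∀ n, U n ∈ 𝒰 n) ∧ (⋃ n, U n) = Set.univ


noncomputable section BCProofAux
open Cardinal in
section
abbrev W1 : Type := (Cardinal.aleph 1).ord.ToType

lemma W1_Iio_countable (a : W1) : (Set.Iio a).Countable := by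
  rw [Cardinal.countable_iff_lt_aleph_one]
  exact Cardinal.mk_Iio_ord_toType a

lemma W1_Iic_countable (a : W1) : (Set.Iic a).Countable := by
  have := (W1_Iio_countable a).insert a
  rwa [show insert a (Set.Iio a) = Set.Iic a from by ext x; simp [le_iff_lt_or_eq, or_comm]] at this

lemma W1_not_countable (S : Set W1) (h : ∀ a : W1, a ∈ S) : ¬ S.Countable := by
  intro hc
  have h1 : (Set.univ : Set W1).Countable := hc.mono (fun x _ => h x)
  have h2 : Cardinal.mk W1 < Cardinal.aleph 1 := by
    rw [← Cardinal.mk_univ, ← Cardinal.countable_iff_lt_aleph_one]; exact h1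
  rw [Cardinal.mk_ord_toType] at h2
  exact lt_irrefl _ h2

/-- key: an uncountable subset of W1 is cofinal -/
lemma W1_uncountable_cofinal (S : Set W1) (h : ¬ S.Countable) (a : W1) : ∃ b ∈ S, a < b := by
  by_contra hb
  push_neg at hb
  exact h ((W1_Iic_countable a).mono hb)

/-- countable families are dominated -/
lemma countable_bound (S : Set (ℕ → ℕ)) (hS : S.Countable) (h₀ : ℕ → ℕ) :
    ∃ g : ℕ → ℕ, (∀ s ∈ S, ∀ᶠ n in atTop, s n < g n) ∧ ∀ n, h₀ n < g n := by
  rcases S.eq_empty_or_nonempty with rfl | hne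
  · exact ⟨fun n => h₀ n + 1, by simp, fun n => Nat.lt_succ_self _⟩
  obtain ⟨σ, rfl⟩ := hS.exists_eq_range hne
  refine ⟨fun n => (Finset.range (n+1)).sup (fun k => σ k n) + h₀ n + 1, ?_, fun n => Nat.lt_succ_of_le (Nat.le_add_left _ _)⟩
  rintro s ⟨k, rfl⟩
  filter_upwards [eventually_ge_atTop k] with n hn
  have : σ k n ≤ (Finset.range (n+1)).sup (fun k => σ k n) :=
    Finset.le_sup (f := fun k => σ k n) (Finset.mem_range.mpr (Nat.lt_succ_of_le hn))
  omega

end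
noncomputable def scaleF (f : W1 → ℕ → ℕ) : W1 → ℕ → ℕ :=
  WellFounded.fix wellFounded_lt fun a rec =>
    haveI := (W1_Iio_countable a).to_subtype
    Classical.choose (countable_bound (Set.range fun b : Set.Iio a => rec b.1 b.2)
      (Set.countable_range _) (f a))

lemma scaleF_spec (f : W1 → ℕ → ℕ) (a : W1) :
    (∀ b : W1, b < a → ∀ᶠ n in atTop, scaleF f b n < scaleF f a n) ∧
      ∀ n, f a n < scaleF f a n := by
  haveI := (W1_Iio_countable a).to_subtype
  have h : scaleF f a = Classical.choose (countable_bound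
      (Set.range fun b : Set.Iio a => scaleF f b.1) (Set.countable_range _) (f a)) :=
    WellFounded.fix_eq _ _ _
  have hs := Classical.choose_spec (countable_bound
      (Set.range fun b : Set.Iio a => scaleF f b.1) (Set.countable_range _) (f a))
  rw [← h] at hs
  exact ⟨fun b hb => hs.1 (scaleF f b) ⟨⟨b, hb⟩, rfl⟩, hs.2⟩



def pfun (g : ℕ → ℕ) (n : ℕ) : ℕ := n + ∑ k ∈ Finset.range (n+1), g k

lemma pfun_succ (g : ℕ → ℕ) (n : ℕ) : pfun g (n+1) = pfun g n + 1 + g (n+1) := by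
  simp [pfun, Finset.sum_range_succ]; ring

lemma le_pfun (g : ℕ → ℕ) (n : ℕ) : n ≤ pfun g n := Nat.le_add_right _ _

lemma self_le_pfun (g : ℕ → ℕ) (n : ℕ) : g n ≤ pfun g n := by
  have : g n ≤ ∑ k ∈ Finset.range (n+1), g k :=
    Finset.single_le_sum (fun i _ => Nat.zero_le _) (Finset.mem_range.mpr (Nat.lt_succ_self n))
  unfold pfun; omega

lemma pfun_add_le (g : ℕ → ℕ) (n j : ℕ) : pfun g n + j ≤ pfun g (n + j) := by
  induction j with
  | zero => simp
  | succ j ih => rw [show n + (j+1) = (n+j)+1 from rfl, pfun_succ]; omega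

def term (i : ℕ) : ℝ := 2 * (1/3 : ℝ)^(i+1)

lemma term_nonneg (i : ℕ) : 0 ≤ term i := by unfold term; positivity

lemma term_pos (i : ℕ) : 0 < term i := by unfold term; positivity

lemma term_anti {i j : ℕ} (h : i ≤ j) : term j ≤ term i := by
  unfold term
  have := pow_le_pow_of_le_one (by norm_num : (0:ℝ) ≤ 1/3) (by norm_num) (Nat.add_le_add_right h 1)
  linarith

lemma summable_term_comp (q : ℕ → ℕ) (hq : ∀ n, n ≤ q n) : Summable (fun n => term (q n)) := by
  apply Summable.of_nonneg_of_le (fun n => term_nonneg _) (fun n => term_anti (hq n))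
  have : Summable (fun n : ℕ => (1/3 : ℝ)^n) := summable_geometric_of_lt_one (by norm_num) (by norm_num)
  simpa [term, pow_succ, mul_comm, mul_assoc] using (this.mul_left (2 * (1/3 : ℝ)))

def eFun (g : ℕ → ℕ) : ℝ := ∑' n, term (pfun g n)

lemma summable_eFun (g : ℕ → ℕ) : Summable (fun n => term (pfun g n)) :=
  summable_term_comp _ (le_pfun g)

lemma tsum_geom : ∑' n : ℕ, (1/3 : ℝ)^n = 3/2 := by
  rw [tsum_geometric_of_lt_one (by norm_num) (by norm_num)]; norm_num

/-- tail estimate -/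
lemma eFun_tail_le (g : ℕ → ℕ) (n : ℕ) :
    ∑' j, term (pfun g (j + n)) ≤ (1/3 : ℝ)^(pfun g n) := by
  have h1 : ∀ j, term (pfun g (j + n)) ≤ term (pfun g n + j) := by
    intro j
    apply term_anti
    have := pfun_add_le g n j
    rw [Nat.add_comm j n]
    omega
  have h2 : Summable (fun j => term (pfun g (j + n))) := by
    exact (summable_eFun g).comp_injective (i := fun j => j + n) (add_left_injective n)
  have h3 : Summable (fun j => term (pfun g n + j)) := by
    apply summable_term_comp
    intro j; have := le_pfun g n; omega
  have h4 : ∑' j, term (pfun g n + j) = (1/3 : ℝ)^(pfun g n) := by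
    have : ∀ j : ℕ, term (pfun g n + j) = (2 * (1/3:ℝ)^(pfun g n + 1)) * (1/3)^j := by
      intro j; unfold term; rw [pow_add]; ring
    rw [tsum_congr this, tsum_mul_left, tsum_geom, pow_succ]
    ring
  calc ∑' j, term (pfun g (j + n)) ≤ ∑' j, term (pfun g n + j) := Summable.tsum_le_tsum h1 h2 h3
    _ = _ := h4

lemma eFun_split (g : ℕ → ℕ) (n : ℕ) :
    eFun g = ∑ j ∈ Finset.range n, term (pfun g j) + ∑' j, term (pfun g (j + n)) :=
  (Summable.sum_add_tsum_nat_add n (summable_eFun g)).symm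

lemma eFun_tail_nonneg (g : ℕ → ℕ) (n : ℕ) : 0 ≤ ∑' j, term (pfun g (j + n)) :=
  tsum_nonneg (fun j => term_nonneg _)

/-- strict comparison: if the pfun sequences agree below n and `pfun g n < pfun g' n`
then `eFun g' < eFun g`. -/
lemma eFun_lt (g g' : ℕ → ℕ) (n : ℕ) (hlt : pfun g n < pfun g' n)
    (heq : ∀ m < n, pfun g m = pfun g' m) : eFun g' < eFun g := by
  have hhead : ∑ j ∈ Finset.range n, term (pfun g j) = ∑ j ∈ Finset.range n, term (pfun g' j) :=
    Finset.sum_congr rfl (fun j hj => by rw [heq j (Finset.mem_range.mp hj)])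
  have htail' : ∑' j, term (pfun g' (j + n)) ≤ (1/3 : ℝ)^(pfun g' n) := eFun_tail_le g' n
  have htailg : term (pfun g n) ≤ ∑' j, term (pfun g (j + n)) := by
    have := Summable.le_tsum (f := fun j => term (pfun g (j + n)))
      (by exact (summable_eFun g).comp_injective (i := fun j => j + n) (add_left_injective n)) 0
      (fun j _ => term_nonneg _)
    simpa using this
  have key : (1/3 : ℝ)^(pfun g' n) < term (pfun g n) := by
    unfold term
    have h1 : ((1:ℝ)/3)^(pfun g' n) ≤ (1/3 : ℝ)^(pfun g n + 1) :=
      pow_le_pow_of_le_one (by norm_num) (by norm_num) hlt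
    have h2 : (0:ℝ) < (1/3 : ℝ)^(pfun g n + 1) := by positivity
    linarith
  rw [eFun_split g n, eFun_split g' n, ← hhead]
  have : ∑' j, term (pfun g' (j + n)) < ∑' j, term (pfun g (j + n)) := by
    calc ∑' j, term (pfun g' (j + n)) ≤ (1/3 : ℝ)^(pfun g' n) := htail'
      _ < term (pfun g n) := key
      _ ≤ _ := htailg
  linarith

lemma pfun_inj : Function.Injective pfun := by
  intro g g' h
  funext n
  induction n with
  | zero =>
    have h0 := congrFun h 0
    simp [pfun] at h0; exact h0
  | succ n ih =>
    have h1 := congrFun h (n+1)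
    have h2 := congrFun h n
    rw [pfun_succ, pfun_succ, h2] at h1
    omega

lemma eFun_inj : Function.Injective eFun := by
  intro g g' h
  by_contra hne
  have hp : pfun g ≠ pfun g' := fun hc => hne (pfun_inj hc)
  have hex : ∃ n, pfun g n ≠ pfun g' n := by
    by_contra hc; push_neg at hc; exact hp (funext hc)
  classical
  have hfind := Nat.find_spec hex
  have hmin : ∀ m < Nat.find hex, pfun g m = pfun g' m := fun m hm => by
    have := Nat.find_min hex hm; simpa [not_not] using this
  rcases lt_or_gt_of_ne hfind with hlt | hgt
  · exact absurd h.symm (ne_of_lt (eFun_lt g g' _ hlt hmin))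
  · exact absurd h (ne_of_lt (eFun_lt g' g _ hgt (fun m hm => (hmin m hm).symm)))

def Dset : Set ℝ := Set.range (fun l : List ℕ => (l.map term).sum)

lemma Dset_countable : Dset.Countable := Set.countable_range _

lemma list_sum_range (f : ℕ → ℝ) (n : ℕ) :
    ((List.range n).map f).sum = ∑ j ∈ Finset.range n, f j := by
  induction n with
  | zero => simp
  | succ n ih => rw [List.range_succ, Finset.sum_range_succ]; simp [ih]

lemma head_mem_Dset (g : ℕ → ℕ) (n : ℕ) :
    (∑ j ∈ Finset.range n, term (pfun g j)) ∈ Dset := by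
  refine ⟨(List.range n).map (pfun g), ?_⟩
  show ((List.map (pfun g) (List.range n)).map term).sum = _
  rw [List.map_map, list_sum_range]
  rfl

lemma concentration (F f : W1 → ℕ → ℕ)
    (hub : ∀ g : ℕ → ℕ, ∃ a, ¬ LeStar (f a) g)
    (hdom : ∀ a, ∀ᶠ n in atTop, f a n < F a n)
    (hmono : ∀ a b : W1, a < b → ∀ᶠ n in atTop, F a n < F b n)
    (U : Set ℝ) (hU : IsOpen U) (hDU : Dset ⊆ U) :
    {a : W1 | eFun (F a) ∉ U}.Countable := by
  classical
  by_contra hS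
  set S := {a : W1 | eFun (F a) ∉ U} with hSdef
  have hex : ∃ n, ¬ BddAbove ((fun a => pfun (F a) n) '' S) := by
    by_contra hball
    push_neg at hball
    choose b hb using hball
    obtain ⟨a₀, ha₀⟩ := hub b
    obtain ⟨a, haS, ha₀a⟩ := W1_uncountable_cofinal S hS a₀
    apply ha₀
    filter_upwards [hdom a₀, hmono a₀ a ha₀a] with n h1 h2
    have h3 : pfun (F a) n ≤ b n := hb n ⟨a, haS, rfl⟩
    have h4 : F a n ≤ pfun (F a) n := self_le_pfun _ _
    omega
  set n₀ := Nat.find hex with hn₀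
  have hunb : ¬ BddAbove ((fun a => pfun (F a) n₀) '' S) := Nat.find_spec hex
  have hbdd : ∀ j : Fin n₀, ∃ x : ℕ, ∀ a ∈ S, pfun (F a) j.1 ≤ x := by
    intro j
    have := Nat.find_min hex j.2
    rw [not_not] at this
    obtain ⟨x, hx⟩ := this
    exact ⟨x, fun a ha => hx ⟨a, ha, rfl⟩⟩
  choose B hB using hbdd
  set T : Set (Fin n₀ → ℕ) := Set.pi Set.univ (fun j => Set.Iic (B j)) with hT
  have hTfin : T.Finite := Set.Finite.pi (fun j => Set.finite_Iic _)
  have hM : ∀ M : ℕ, ∃ a ∈ S, M < pfun (F a) n₀ := by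
    intro M
    rw [not_bddAbove_iff] at hunb
    obtain ⟨y, ⟨a, haS, rfl⟩, hy⟩ := hunb M
    exact ⟨a, haS, hy⟩
  choose aa haaS haalt using hM
  haveI : Finite ↥T := hTfin.to_subtype
  set ψ : ℕ → ↥T := fun M => ⟨fun j => pfun (F (aa M)) j.1,
    fun j _ => hB j _ (haaS M)⟩ with hψ
  obtain ⟨w, hw⟩ := Finite.exists_infinite_fiber ψ
  have hfib : (ψ ⁻¹' {w}).Infinite := Set.infinite_coe_iff.mp hw
  obtain ⟨M₀, hM₀⟩ := hfib.nonempty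
  set d : ℝ := ∑ j ∈ Finset.range n₀, term (pfun (F (aa M₀)) j) with hd
  have hdU : d ∈ U := hDU (head_mem_Dset _ _)
  obtain ⟨ε, hε, hball⟩ := Metric.isOpen_iff.mp hU d hdU
  obtain ⟨k, hk⟩ : ∃ k : ℕ, (1/3 : ℝ)^k < ε :=
    exists_pow_lt_of_lt_one hε (by norm_num)
  have : ∃ M ∈ ψ ⁻¹' {w}, k < M := by
    by_contra hc
    push_neg at hc
    exact hfib ((Set.finite_Iic k).subset hc)
  obtain ⟨M, hMfib, hkM⟩ := this
  have hpre : ∀ j < n₀, pfun (F (aa M)) j = pfun (F (aa M₀)) j := by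
    intro j hj
    have h1 : ψ M = w := hMfib
    have h2 : ψ M₀ = w := hM₀
    have h3 := congrFun (congrArg Subtype.val (h1.trans h2.symm)) ⟨j, hj⟩
    exact h3
  have hhead : ∑ j ∈ Finset.range n₀, term (pfun (F (aa M)) j) = d :=
    Finset.sum_congr rfl (fun j hj => by rw [hpre j (Finset.mem_range.mp hj)])
  have htail1 : ∑' j, term (pfun (F (aa M)) (j + n₀)) ≤ (1/3 : ℝ)^(pfun (F (aa M)) n₀) :=
    eFun_tail_le _ _
  have htail2 : (1/3 : ℝ)^(pfun (F (aa M)) n₀) ≤ (1/3 : ℝ)^k := by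
    apply pow_le_pow_of_le_one (by norm_num) (by norm_num)
    have := haalt M
    omega
  have hdist : dist (eFun (F (aa M))) d < ε := by
    rw [Real.dist_eq, eFun_split (F (aa M)) n₀, hhead]
    have h0 := eFun_tail_nonneg (F (aa M)) n₀
    rw [abs_of_nonneg (by linarith)]
    linarith
  exact haaS M (hball hdist)

section Top
variable {Y : Type*} [TopologicalSpace Y]

lemma cover_mem {𝒰 : Set (Set Y)} (h : IsOpenCover 𝒰) (y : Y) : ∃ U ∈ 𝒰, y ∈ U := by
  have : y ∈ ⋃₀ 𝒰 := by rw [h.2]; trivial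
  exact this

lemma cover_nonempty {𝒰 : Set (Set Y)} (h : IsOpenCover 𝒰) (hne : Nonempty Y) :
    ∃ U, U ∈ 𝒰 := by
  obtain ⟨y⟩ := hne
  obtain ⟨U, hU, _⟩ := cover_mem h y
  exact ⟨U, hU⟩

/-- Hurewicz without the "no finite subcover" hypothesis. -/
lemma ufin' (hY : UfinOGamma Y) (hne : Nonempty Y) (𝒰 : ℕ → Set (Set Y))
    (hc : ∀ n, IsOpenCover (𝒰 n)) :
    ∃ ℱ : ℕ → Set (Set Y),
      (∀ n, ℱ n ⊆ 𝒰 n ∧ (ℱ n).Finite) ∧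
      ∀ x : Y, ∀ᶠ n in Filter.atTop, x ∈ ⋃₀ ℱ n := by
  classical
  by_cases hinf : {n | ¬ HasFinSubcover (𝒰 n)}.Infinite
  · set p := fun n => ¬ HasFinSubcover (𝒰 n) with hp
    obtain ⟨ℱ', hℱ'sub, hℱ'ev⟩ := hY (fun k => 𝒰 (Nat.nth p k))
      (fun k => hc _) (fun k => Nat.nth_mem_of_infinite hinf k)
    refine ⟨fun n => if h : HasFinSubcover (𝒰 n) then h.choose else ℱ' (Nat.count p n),
      fun n => ?_, fun x => ?_⟩
    · by_cases h : HasFinSubcover (𝒰 n)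
      · simp only [h, dif_pos]
        exact ⟨h.choose_spec.1, h.choose_spec.2.1⟩
      · simp only [h, dif_neg, not_false_iff]
        have : Nat.nth p (Nat.count p n) = n := Nat.nth_count h
        constructor
        · intro U hU
          have h2 := (hℱ'sub (Nat.count p n)).1 hU
          rwa [this] at h2
        · exact (hℱ'sub (Nat.count p n)).2
    · obtain ⟨N, hN⟩ := (eventually_atTop).mp (hℱ'ev x)
      rw [eventually_atTop]
      refine ⟨Nat.nth p N, fun n hn => ?_⟩
      by_cases h : HasFinSubcover (𝒰 n)
      · simp only [h, dif_pos]
        rw [h.choose_spec.2.2]; trivial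
      · simp only [h, dif_neg, not_false_iff]
        apply hN
        have h1 : Nat.nth p (Nat.count p n) = n := Nat.nth_count h
        by_contra hcon
        push_neg at hcon
        have h2 : Nat.nth p (Nat.count p n) < Nat.nth p N :=
          (Nat.nth_lt_nth hinf).mpr hcon
        omega
  · rw [Set.not_infinite] at hinf
    refine ⟨fun n => if h : HasFinSubcover (𝒰 n) then h.choose else
      {(cover_nonempty (hc n) hne).choose}, fun n => ?_, fun x => ?_⟩
    · by_cases h : HasFinSubcover (𝒰 n)
      · simp only [h, dif_pos]
        exact ⟨h.choose_spec.1, h.choose_spec.2.1⟩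
      · simp only [h, dif_neg, not_false_iff]
        exact ⟨Set.singleton_subset_iff.mpr (cover_nonempty (hc n) hne).choose_spec,
          Set.finite_singleton _⟩
    · obtain ⟨N, hN⟩ := hinf.bddAbove
      rw [eventually_atTop]
      refine ⟨N + 1, fun n hn => ?_⟩
      have h : HasFinSubcover (𝒰 n) := by
        by_contra hcon
        have : n ≤ N := hN hcon
        omega
      simp only [h, dif_pos]
      rw [h.choose_spec.2.2]; trivial
end Top

section Real
/-- concentrated sets are Rothberger -/
lemma s1oo_of_concentrated (Z D : Set ℝ) (hne : Z.Nonempty) (hD : D.Countable)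
    (hDne : D.Nonempty) (hDZ : D ⊆ Z)
    (hconc : ∀ U : Set ℝ, IsOpen U → D ⊆ U → (Z \ U).Countable) : S1OO Z := by
  intro 𝒰 h𝒰
  classical
  haveI : Nonempty ↥Z := ⟨⟨hne.choose, hne.choose_spec⟩⟩
  obtain ⟨dD, hdD⟩ := hD.exists_eq_range hDne
  have hDmem : ∀ k, dD k ∈ Z := fun k => hDZ (by rw [hdD]; exact ⟨k, rfl⟩)
  have hpick2 : ∀ k : ℕ, ∃ U ∈ 𝒰 (2*k), (⟨dD k, hDmem k⟩ : ↥Z) ∈ U :=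
    fun k => cover_mem (h𝒰 (2*k)) _
  choose Ue hUe hUem using hpick2
  have hopen : ∀ k, ∃ V : Set ℝ, IsOpen V ∧ (Subtype.val ⁻¹' V : Set ↥Z) = Ue k :=
    fun k => isOpen_induced_iff.mp ((h𝒰 (2*k)).1 _ (hUe k))
  choose V hVopen hVeq using hopen
  set W := ⋃ k, V k with hW
  have hWopen : IsOpen W := isOpen_iUnion hVopen
  have hDW : D ⊆ W := by
    rw [hdD]; rintro x ⟨k, rfl⟩
    have := hUem k
    rw [← hVeq k] at this
    exact Set.mem_iUnion.mpr ⟨k, this⟩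
  have hR := hconc W hWopen hDW
  obtain ⟨d₀, hd₀⟩ := hDne
  have hR' : (insert d₀ (Z \ W)).Countable := hR.insert _
  obtain ⟨r, hr⟩ := hR'.exists_eq_range ⟨d₀, Set.mem_insert _ _⟩
  have hpick3 : ∀ j : ℕ, ∃ U ∈ 𝒰 (2*j+1), ∀ hj : r j ∈ Z, (⟨r j, hj⟩ : ↥Z) ∈ U := by
    intro j
    by_cases hj : r j ∈ Z
    · obtain ⟨U, hU, hxU⟩ := cover_mem (h𝒰 (2*j+1)) (⟨r j, hj⟩ : ↥Z)
      exact ⟨U, hU, fun _ => hxU⟩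
    · obtain ⟨U, hU⟩ := cover_nonempty (h𝒰 (2*j+1)) ‹Nonempty ↥Z›
      exact ⟨U, hU, fun h => absurd h hj⟩
  choose Uo hUo hUom using hpick3
  refine ⟨fun n => if n % 2 = 0 then Ue (n / 2) else Uo (n / 2), fun n => ?_, ?_⟩
  · by_cases h : n % 2 = 0
    · simp only [h, if_pos]
      have h2 : 2 * (n/2) = n := by omega
      have := hUe (n/2)
      rwa [h2] at this
    · simp only [h, if_neg, not_false_iff]
      have h2 : 2 * (n/2) + 1 = n := by omega
      have := hUo (n/2)
      rwa [h2] at this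
  · ext x
    simp only [Set.mem_iUnion, Set.mem_univ, iff_true]
    by_cases hxW : (x : ℝ) ∈ W
    · obtain ⟨k, hk⟩ := Set.mem_iUnion.mp hxW
      refine ⟨2*k, ?_⟩
      have h1 : (2*k) % 2 = 0 := by omega
      have h2 : (2*k) / 2 = k := by omega
      simp only [h1, if_pos, h2]
      rw [← hVeq k]
      exact hk
    · have hxR : (x : ℝ) ∈ insert d₀ (Z \ W) := Set.mem_insert_of_mem _ ⟨x.2, hxW⟩
      rw [hr] at hxR
      obtain ⟨j, hj⟩ := hxR
      refine ⟨2*j+1, ?_⟩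
      have h1 : (2*j+1) % 2 ≠ 0 := by omega
      have h2 : (2*j+1) / 2 = j := by omega
      simp only [h1, if_neg, not_false_iff, h2]
      have hjZ : r j ∈ Z := by rw [hj]; exact x.2
      have := hUom j hjZ
      have hx : (⟨r j, hjZ⟩ : ↥Z) = x := Subtype.ext hj
      rwa [hx] at this
end Real

lemma s1oo_of_smz_ufin (X : Set ℝ) (hne : X.Nonempty) (hsmz : StronglyNull X)
    (hu : UfinOGamma ↥X) : S1OO X := by
  classical
  intro 𝒰 h𝒰
  haveI : Nonempty ↥X := ⟨⟨hne.choose, hne.choose_spec⟩⟩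
  set 𝒱 : ℕ → Set (Set ↥X) := fun n =>
    {S | ∃ q r : ℚ, q < r ∧ S = Subtype.val ⁻¹' (Set.Ioo (q:ℝ) (r:ℝ)) ∧
      ∃ U ∈ 𝒰 n, Subtype.val ⁻¹' (Set.Ioo ((q:ℝ) - ((r:ℝ) - (q:ℝ))) ((r:ℝ) + ((r:ℝ) - (q:ℝ)))) ⊆ U} with h𝒱
  have h𝒱c : ∀ n, IsOpenCover (𝒱 n) := by
    intro n
    constructor
    · rintro S ⟨q, r, hqr, rfl, -⟩
      exact isOpen_Ioo.preimage continuous_subtype_val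
    · rw [Set.eq_univ_iff_forall]
      intro x
      obtain ⟨U, hU, hxU⟩ := cover_mem (h𝒰 n) x
      obtain ⟨V, hVopen, hVeq⟩ := isOpen_induced_iff.mp ((h𝒰 n).1 U hU)
      have hxV : (x:ℝ) ∈ V := by rw [← hVeq] at hxU; exact hxU
      obtain ⟨ε, hε, hball⟩ := Metric.isOpen_iff.mp hVopen _ hxV
      obtain ⟨q, hq1, hq2⟩ := exists_rat_btwn (show (x:ℝ) - ε/4 < (x:ℝ) by linarith)
      obtain ⟨r, hr1, hr2⟩ := exists_rat_btwn (show (x:ℝ) < (x:ℝ) + ε/4 by linarith)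
      refine Set.mem_sUnion.mpr ⟨Subtype.val ⁻¹' (Set.Ioo (q:ℝ) (r:ℝ)),
        ⟨q, r, by exact_mod_cast hq2.trans hr1, rfl, U, hU, ?_⟩, by exact ⟨hq2, hr1⟩⟩
      intro y hy
      rw [← hVeq]
      apply hball
      simp only [Set.mem_preimage, Set.mem_Ioo] at hy
      rw [Metric.mem_ball, Real.dist_eq, abs_lt]
      constructor <;> [linarith [hy.1]; linarith [hy.2]]
  obtain ⟨ℱ, hℱ, hev⟩ := ufin' hu ‹_› 𝒱 h𝒱c
  have h' : ∀ n (S : {S : Set ↥X // S ∈ ℱ n}), ∃ q r : ℚ, q < r ∧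
      S.1 = Subtype.val ⁻¹' (Set.Ioo (q:ℝ) (r:ℝ)) ∧
      ∃ U ∈ 𝒰 n, Subtype.val ⁻¹' (Set.Ioo ((q:ℝ) - ((r:ℝ) - (q:ℝ))) ((r:ℝ) + ((r:ℝ) - (q:ℝ)))) ⊆ U :=
    fun n S => (hℱ n).1 S.2
  choose qf rf hlt heq Uf hUmem hUsub using h'
  have hfin : ∀ n, Finite {S : Set ↥X // S ∈ ℱ n} := fun n => (hℱ n).2.to_subtype
  haveI := hfin
  haveI : ∀ n, Fintype {S : Set ↥X // S ∈ ℱ n} := fun n => Fintype.ofFinite _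
  set εQ : ℕ → ℚ := fun n =>
    if h : Nonempty {S : Set ↥X // S ∈ ℱ n} then
      (Finset.univ.inf' (@Finset.univ_nonempty _ _ h) (fun S => rf n S - qf n S))
    else 1 with hεQ
  have hεpos : ∀ n, (0:ℚ) < εQ n := by
    intro n
    rw [hεQ]
    by_cases h : Nonempty {S : Set ↥X // S ∈ ℱ n}
    · simp only [h, dif_pos]
      rw [Finset.lt_inf'_iff]
      intro S _
      have := hlt n S
      linarith
    · simp only [h, dif_neg, not_false_iff]
      norm_num
  have hεle : ∀ n (S : {S : Set ↥X // S ∈ ℱ n}), εQ n ≤ rf n S - qf n S := by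
    intro n S
    have h : Nonempty {S : Set ↥X // S ∈ ℱ n} := ⟨S⟩
    rw [hεQ]
    simp only [h, dif_pos]
    exact Finset.inf'_le _ (Finset.mem_univ S)
  -- strongly null coverings, one per m
  have hJ : ∀ m : ℕ, ∃ J : ℕ → Set ℝ,
      (∀ j, EMetric.diam (J j) < ENNReal.ofReal ((εQ (Nat.pair m j) : ℝ))) ∧ X ⊆ ⋃ j, J j := by
    intro m
    apply hsmz (fun j => ((εQ (Nat.pair m j) : ℝ)))
    intro j
    exact_mod_cast hεpos _
  choose J hJdiam hJcov using hJ
  -- selection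
  have hsel : ∀ n, ∃ U ∈ 𝒰 n, ∀ x : ↥X,
      ((x:ℝ) ∈ J (Nat.unpair n).1 (Nat.unpair n).2 ∧ x ∈ ⋃₀ ℱ n) → x ∈ U := by
    intro n
    by_cases hC : ∃ y : ↥X, (y:ℝ) ∈ J (Nat.unpair n).1 (Nat.unpair n).2 ∧ y ∈ ⋃₀ ℱ n
    · obtain ⟨y, hyJ, S, hS, hyS⟩ := hC
      refine ⟨Uf n ⟨S, hS⟩, hUmem n ⟨S, hS⟩, ?_⟩
      rintro x ⟨hxJ, -⟩
      apply hUsub n ⟨S, hS⟩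
      have hy2 : (y:ℝ) ∈ Set.Ioo ((qf n ⟨S,hS⟩ : ℝ)) ((rf n ⟨S,hS⟩ : ℝ)) := by
        have hyS' : y ∈ (⟨S, hS⟩ : {S // S ∈ ℱ n}).1 := hyS
        rw [heq n ⟨S,hS⟩] at hyS'
        exact hyS'
      have hdist : dist (x:ℝ) (y:ℝ) < ((εQ n : ℝ)) := by
        rw [← edist_lt_ofReal]
        calc edist (x:ℝ) (y:ℝ) ≤ EMetric.diam (J (Nat.unpair n).1 (Nat.unpair n).2) :=
              EMetric.edist_le_diam_of_mem hxJ hyJ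
          _ < ENNReal.ofReal ((εQ n : ℝ)) := by
              have := hJdiam (Nat.unpair n).1 (Nat.unpair n).2
              rwa [Nat.pair_unpair] at this
      have hεle' : ((εQ n : ℝ)) ≤ ((rf n ⟨S,hS⟩ : ℝ)) - ((qf n ⟨S,hS⟩ : ℝ)) := by
        exact_mod_cast hεle n ⟨S, hS⟩
      simp only [Set.mem_preimage, Set.mem_Ioo]
      rw [Real.dist_eq, abs_lt] at hdist
      obtain ⟨hy3, hy4⟩ := hy2
      constructor <;> linarith
    · obtain ⟨U, hU⟩ := cover_nonempty (h𝒰 n) ‹_›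
      exact ⟨U, hU, fun x hx => absurd ⟨x, hx.1, hx.2⟩ hC⟩
  choose Usel hUselmem hUselsub using hsel
  refine ⟨Usel, hUselmem, ?_⟩
  rw [Set.eq_univ_iff_forall]
  intro x
  rw [Set.mem_iUnion]
  obtain ⟨m, hm⟩ := eventually_atTop.mp (hev x)
  obtain ⟨j, hj⟩ := Set.mem_iUnion.mp ((hJcov m) x.2)
  refine ⟨Nat.pair m j, hUselsub (Nat.pair m j) x ⟨?_, ?_⟩⟩
  · rw [Nat.unpair_pair]
    exact hj
  · exact hm _ (Nat.left_le_pair m j)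

lemma ufin_of_bdd (Y : Type*) [TopologicalSpace Y] [SecondCountableTopology Y]
    (hne : Nonempty Y)
    (hb : ∀ φ : Y → ℕ → ℕ, ∃ g : ℕ → ℕ, ∀ y, LeStar (φ y) g) : UfinOGamma Y := by
  intro 𝒰 hc _
  classical
  have hsub : ∀ n, ∃ T : Set (Set Y), T.Countable ∧ T ⊆ 𝒰 n ∧ ⋃₀ T = Set.univ := by
    intro n
    obtain ⟨T, hTc, hTsub, hTeq⟩ := TopologicalSpace.isOpen_sUnion_countable (𝒰 n)
      (fun s hs => (hc n).1 s hs)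
    exact ⟨T, hTc, hTsub, by rw [hTeq, (hc n).2]⟩
  choose T hTc hTsub hTeq using hsub
  have hTne : ∀ n, (T n).Nonempty := by
    intro n
    rcases Set.eq_empty_or_nonempty (T n) with h | h
    · exfalso
      obtain ⟨y⟩ := hne
      have hy : y ∈ ⋃₀ T n := by rw [hTeq n]; trivial
      rw [h] at hy
      simpa using hy
    · exact h
  have := fun n => (hTc n).exists_eq_range (hTne n)
  choose u hu using this
  have hfind : ∀ (y : Y) (n : ℕ), ∃ m, y ∈ u n m := by
    intro y n
    have hy : y ∈ ⋃₀ T n := by rw [hTeq n]; trivial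
    obtain ⟨t, ht, hyt⟩ := hy
    rw [hu n] at ht
    obtain ⟨m, rfl⟩ := ht
    exact ⟨m, hyt⟩
  set φ : Y → ℕ → ℕ := fun y n => Nat.find (hfind y n) with hφ
  obtain ⟨g, hg⟩ := hb φ
  refine ⟨fun n => u n '' Set.Iic (g n), fun n => ⟨?_, (Set.finite_Iic _).image _⟩, fun y => ?_⟩
  · rintro _ ⟨m, -, rfl⟩
    exact hTsub n (by rw [hu n]; exact ⟨m, rfl⟩)
  · filter_upwards [hg y] with n hn
    exact ⟨u n (φ y n), ⟨φ y n, hn, rfl⟩, Nat.find_spec (hfind y n)⟩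


lemma smz_mono {X Y : Set ℝ} (h : Y ⊆ X) (hX : StronglyNull X) : StronglyNull Y := by
  intro ε hε
  obtain ⟨I, hI, hcov⟩ := hX ε hε
  exact ⟨I, hI, h.trans hcov⟩

end BCProofAux

/-- Miller: Borel's Conjecture for the Rothberger property implies Borel's Conjecture. -/
theorem BC_for_rothberger_implies_BC
    (h : ∀ X : Set ℝ, S1OO X → X.Countable) :
    ∀ X : Set ℝ, StronglyNull X → X.Countable := by
  classical
  intro X hX
  by_contra hc
  have hne : X.Nonempty := by
    rcases Set.eq_empty_or_nonempty X with rfl | h'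
    · exact absurd Set.countable_empty hc
    · exact h'
  haveI hW1ne : Nonempty W1 := by
    rw [← Cardinal.mk_ne_zero_iff, Cardinal.mk_ord_toType]
    exact ne_of_gt (lt_of_le_of_lt zero_le Cardinal.aleph0_lt_aleph_one)
  by_cases hcase : ∀ f : W1 → ℕ → ℕ, ∃ g : ℕ → ℕ, ∀ a, LeStar (f a) g
  · -- every ℵ₁-indexed family is bounded: take a subset of size ℵ₁, it is Hurewicz + SMZ
    have hXbig : Cardinal.aleph0 < Cardinal.mk ↥X := by
      by_contra hle
      push_neg at hle
      rw [Cardinal.mk_le_aleph0_iff, Set.countable_coe_iff] at hle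
      exact hc hle
    have hcard : Cardinal.mk W1 ≤ Cardinal.mk ↥X := by
      rw [Cardinal.mk_ord_toType, ← Cardinal.succ_aleph0]
      exact Order.succ_le_of_lt hXbig
    obtain ⟨ι⟩ := Cardinal.le_def _ _ |>.mp hcard
    set e : W1 → ℝ := fun a => ((ι a : ↥X) : ℝ) with he
    have heinj : Function.Injective e := fun a b hab => ι.injective (Subtype.ext hab)
    set Y : Set ℝ := Set.range e with hY
    have hYX : Y ⊆ X := by rintro _ ⟨a, rfl⟩; exact (ι a).2
    have hYne : Y.Nonempty := ⟨e (Classical.arbitrary W1), ⟨_, rfl⟩⟩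
    have hYsmz : StronglyNull Y := smz_mono hYX hX
    have hbY : ∀ φ : ↥Y → ℕ → ℕ, ∃ g : ℕ → ℕ, ∀ y, LeStar (φ y) g := by
      intro φ
      obtain ⟨g, hg⟩ := hcase (fun a => φ ⟨e a, ⟨a, rfl⟩⟩)
      refine ⟨g, fun y => ?_⟩
      obtain ⟨a, ha⟩ := y.2
      have hy : (⟨e a, ⟨a, rfl⟩⟩ : ↥Y) = y := Subtype.ext ha
      rw [← hy]
      exact hg a
    haveI : Nonempty ↥Y := ⟨⟨hYne.choose, hYne.choose_spec⟩⟩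
    have hs1 : S1OO Y := s1oo_of_smz_ufin Y hYne hYsmz (ufin_of_bdd ↥Y ‹_› hbY)
    have hYc := h Y hs1
    have huniv : (Set.univ : Set W1).Countable := by
      have h1 : (e ⁻¹' Y).Countable := hYc.preimage heinj
      rwa [hY, Set.preimage_range] at h1
    exact W1_not_countable Set.univ (fun a => Set.mem_univ a) huniv
  · push_neg at hcase
    obtain ⟨f, hf⟩ := hcase
    set F := scaleF f with hF
    have hdom : ∀ a, ∀ᶠ n in Filter.atTop, f a n < F a n :=
      fun a => Filter.Eventually.of_forall ((scaleF_spec f a).2)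
    have hmono : ∀ a b : W1, a < b → ∀ᶠ n in Filter.atTop, F a n < F b n :=
      fun a b hab => (scaleF_spec f b).1 a hab
    set Z : Set ℝ := Dset ∪ Set.range (fun a : W1 => eFun (F a)) with hZ
    have hDne : Dset.Nonempty := ⟨([] : List ℕ).map term |>.sum, ⟨[], rfl⟩⟩
    have hconc : ∀ U : Set ℝ, IsOpen U → Dset ⊆ U → (Z \ U).Countable := by
      intro U hU hDU
      have hcnt := concentration F f (fun g => hf g) hdom hmono U hU hDU
      apply Set.Countable.mono _ (hcnt.image (fun a => eFun (F a)))
      rintro x ⟨hxZ, hxU⟩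
      rcases hxZ with hxD | ⟨a, rfl⟩
      · exact absurd (hDU hxD) hxU
      · exact ⟨a, hxU, rfl⟩
    have hZne : Z.Nonempty := ⟨hDne.choose, Or.inl hDne.choose_spec⟩
    have hs1 : S1OO Z := s1oo_of_concentrated Z Dset hZne Dset_countable hDne
      Set.subset_union_left hconc
    have hZc := h Z hs1
    have hinj : Function.Injective (fun a : W1 => eFun (F a)) := by
      intro a b hab
      by_contra hne'
      rcases lt_or_gt_of_ne hne' with hlt | hgt
      · obtain ⟨n, hn⟩ := (hmono a b hlt).exists
        have := congrFun (eFun_inj hab) n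
        omega
      · obtain ⟨n, hn⟩ := (hmono b a hgt).exists
        have := congrFun (eFun_inj hab) n
        omega
    have huniv : (Set.univ : Set W1).Countable := by
      have h1 : (Set.range (fun a : W1 => eFun (F a))).Countable :=
        hZc.mono Set.subset_union_right
      have h2 := h1.preimage hinj
      rwa [Set.preimage_range] at h2
    exact W1_not_countable Set.univ (fun a => Set.mem_univ a) huniv
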